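/- Let C be a closed convex cone in a finite-dimensional real inner product space, let x ∈ C, and let E be the smallest face of C containing x. Then: dir(x, C) = C + lin E; ldir(x, C) = lin E; cl dir(x, C) = (E^△)*; and tan(x, C) = (E^△)^⊥, where lin denotes linear span, (E^△)* the dual cone of the conjugate face E^△, and (E^△)^⊥ the orthogonal complement of the span of E^△. -/

import Mathlib

open scoped RealInnerProductSpace Pointwise

noncomputable section

/-- The dual cone of a set `K` in a real inner product space. -/
def dualConeSet {Y : Type*} [NormedAddCommGroup Y] [InnerProductSpace ℝ Y] (K : Set Y) : Set Y :=
  {y | ∀ x ∈ K, 0 ≤ ⟪y, x⟫}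

/-- The set of feasible directions at `x` in the convex set `C`. -/
def dirSet {Y : Type*} [NormedAddCommGroup Y] [InnerProductSpace ℝ Y]
    (x : Y) (C : Set Y) : Set Y :=
  {v | ∃ ε : ℝ, 0 < ε ∧ x + ε • v ∈ C}

/-- The lineality space of the set of feasible directions at `x` in `C`. -/
def ldirSet {Y : Type*} [NormedAddCommGroup Y] [InnerProductSpace ℝ Y]
    (x : Y) (C : Set Y) : Set Y :=
  {v | v ∈ dirSet x C ∧ -v ∈ dirSet x C}

/-- The tangent space at `x` in `C`. -/
def tanSet {Y : Type*} [NormedAddCommGroup Y] [InnerProductSpace ℝ Y]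
    (x : Y) (C : Set Y) : Set Y :=
  {v | v ∈ closure (dirSet x C) ∧ -v ∈ closure (dirSet x C)}

/-- `E` is a face of the cone `C`. -/
def IsFaceOf {Y : Type*} [NormedAddCommGroup Y] [InnerProductSpace ℝ Y]
    (C E : Set Y) : Prop :=
  E ⊆ C ∧ Convex ℝ E ∧
    ∀ x₁ ∈ C, ∀ x₂ ∈ C, (1 / 2 : ℝ) • (x₁ + x₂) ∈ E → x₁ ∈ E ∧ x₂ ∈ E

/-- `E` is the smallest face of `C` containing `x`. -/
def IsSmallestFace {Y : Type*} [NormedAddCommGroup Y] [InnerProductSpace ℝ Y]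
    (C E : Set Y) (x : Y) : Prop :=
  IsFaceOf C E ∧ x ∈ E ∧ ∀ E', IsFaceOf C E' → x ∈ E' → E ⊆ E'

/-- The conjugate face `E^△ = C* ∩ E^⊥` of a face `E` of `C`. -/
def conjFace {Y : Type*} [NormedAddCommGroup Y] [InnerProductSpace ℝ Y]
    (C E : Set Y) : Set Y :=
  dualConeSet C ∩ {y | ∀ e ∈ E, ⟪y, e⟫ = 0}

/-- for a closed convex cone `C`, `x ∈ C`, and `E` the smallest face of `C`
containing `x`: `dir(x,C) = C + lin E`, `ldir(x,C) = lin E`, `cl dir(x,C) = (E^△)*`, and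
`tan(x,C) = (E^△)^⊥`. -/
theorem dir_ldir_cldir_tan_eq
    {Y : Type*} [NormedAddCommGroup Y] [InnerProductSpace ℝ Y] [FiniteDimensional ℝ Y]
    (C : Set Y)
    (hCclosed : IsClosed C) (hCconv : Convex ℝ C)
    (hCcone : ∀ (t : ℝ), 0 ≤ t → ∀ y ∈ C, t • y ∈ C)
    (x : Y) (hx : x ∈ C)
    (E : Set Y) (hE : IsSmallestFace C E x) :
    dirSet x C = C + (Submodule.span ℝ E : Set Y) ∧
    ldirSet x C = (Submodule.span ℝ E : Set Y) ∧
    closure (dirSet x C) = dualConeSet (conjFace C E) ∧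
    tanSet x C = {y : Y | ∀ w ∈ conjFace C E, ⟪y, w⟫ = 0} := by
  classical
  obtain ⟨⟨hEC, hEconv, hEface⟩, hxE, hEmin⟩ := hE
  haveI : CompleteSpace Y := FiniteDimensional.complete ℝ Y
  set L : Submodule ℝ Y := Submodule.span ℝ E with hL
  -- basic closure properties of C
  have h0C : (0 : Y) ∈ C := by simpa using hCcone 0 le_rfl x hx
  have haddC : ∀ a ∈ C, ∀ b ∈ C, a + b ∈ C := by
    intro a ha b hb
    have h := hCconv ha hb (by norm_num : (0:ℝ) ≤ 1/2) (by norm_num : (0:ℝ) ≤ 1/2)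
      (by norm_num)
    have h2 := hCcone 2 (by norm_num) _ h
    have : (2:ℝ) • ((1/2:ℝ) • a + (1/2:ℝ) • b) = a + b := by
      rw [smul_add, smul_smul, smul_smul]; norm_num
    rwa [this] at h2
  -- 0 ∈ E
  have h0E : (0 : Y) ∈ E := by
    have h2x : (2:ℝ) • x ∈ C := hCcone 2 (by norm_num) x hx
    have hkey : (1/2 : ℝ) • ((2:ℝ) • x + 0) ∈ E := by
      have : (1/2 : ℝ) • ((2:ℝ) • x + 0) = x := by
        rw [add_zero, smul_smul]; norm_num
      rwa [this]
    exact (hEface _ h2x 0 h0C hkey).2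
  -- E is closed under nonnegative scaling
  have hsmulE : ∀ t : ℝ, 0 ≤ t → ∀ e ∈ E, t • e ∈ E := by
    have hsmall : ∀ t : ℝ, 0 ≤ t → t ≤ 1 → ∀ e ∈ E, t • e ∈ E := by
      intro t ht ht1 e he
      have h := hEconv h0E he (by linarith : (0:ℝ) ≤ 1 - t) ht (by ring)
      simpa using h
    have hkey : ∀ n : ℕ, ∀ t : ℝ, 0 ≤ t → t ≤ 2 ^ n → ∀ e ∈ E, t • e ∈ E := by
      intro n
      induction n with
      | zero => intro t ht ht1 e he; exact hsmall t ht (by simpa using ht1) e he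
      | succ n ih =>
        intro t ht ht2 e he
        have hhalf : (t / 2) • e ∈ E := by
          refine ih (t/2) (by linarith) ?_ e he
          have : (2:ℝ)^(n+1) = 2 * 2^n := by ring
          rw [this] at ht2; linarith
        have htC : t • e ∈ C := hCcone t ht e (hEC he)
        have heq : (1/2 : ℝ) • (t • e + 0) = (t/2) • e := by
          rw [add_zero, smul_smul]; ring_nf
        exact (hEface _ htC 0 h0C (by rw [heq]; exact hhalf)).1
    intro t ht e he
    obtain ⟨n, hn⟩ := pow_unbounded_of_one_lt t (one_lt_two (α := ℝ))
    exact hkey n t ht hn.le e he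
  -- E is closed under addition
  have haddE : ∀ a ∈ E, ∀ b ∈ E, a + b ∈ E := by
    intro a ha b hb
    have h := hEconv ha hb (by norm_num : (0:ℝ) ≤ 1/2) (by norm_num : (0:ℝ) ≤ 1/2)
      (by norm_num)
    have h2 := hsmulE 2 (by norm_num) _ h
    have : (2:ℝ) • ((1/2:ℝ) • a + (1/2:ℝ) • b) = a + b := by
      rw [smul_add, smul_smul, smul_smul]; norm_num
    rwa [this] at h2
  -- every element of span E is a difference of elements of E
  have hrep : ∀ s ∈ L, ∃ a ∈ E, ∃ b ∈ E, s = a - b := by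
    intro s hs
    induction hs using Submodule.span_induction with
    | mem y hy => exact ⟨y, hy, 0, h0E, by simp⟩
    | zero => exact ⟨0, h0E, 0, h0E, by simp⟩
    | add y z _ _ hy hz =>
      obtain ⟨a, ha, b, hb, rfl⟩ := hy
      obtain ⟨c, hc, d, hd, rfl⟩ := hz
      exact ⟨a + c, haddE a ha c hc, b + d, haddE b hb d hd, by abel⟩
    | smul t y _ hy =>
      obtain ⟨a, ha, b, hb, rfl⟩ := hy
      rcases le_or_gt 0 t with htpos | htneg
      · exact ⟨t • a, hsmulE t htpos a ha, t • b, hsmulE t htpos b hb, by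
          rw [smul_sub]⟩
      · refine ⟨(-t) • b, hsmulE (-t) (by linarith) b hb,
          (-t) • a, hsmulE (-t) (by linarith) a ha, ?_⟩
        rw [smul_sub]; module
  -- E is contained in the face {y ∈ C | ∃ ε > 0, x - ε y ∈ C}
  have hshrink : ∀ y : Y, ∀ ε ε' : ℝ, 0 < ε → ε ≤ ε' → x - ε' • y ∈ C → x - ε • y ∈ C := by
    intro y ε ε' hε hεε' hmem
    have hε' : (0:ℝ) < ε' := lt_of_lt_of_le hε hεε'
    have h : (ε / ε') • (x - ε' • y) + (1 - ε / ε') • x ∈ C :=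
      hCconv hmem hx (by positivity)
        (by
          have : ε / ε' ≤ 1 := (div_le_one hε').2 hεε'
          linarith) (by ring)
    have heq : (ε / ε') • (x - ε' • y) + (1 - ε / ε') • x = x - ε • y := by
      rw [smul_sub, smul_smul, div_mul_cancel₀ _ hε'.ne']
      module
    rwa [heq] at h
  have hmemF : ∀ e ∈ E, ∃ ε : ℝ, 0 < ε ∧ x - ε • e ∈ C := by
    set F : Set Y := {y | y ∈ C ∧ ∃ ε : ℝ, 0 < ε ∧ x - ε • y ∈ C} with hF
    have hFface : IsFaceOf C F := by
      refine ⟨fun y hy => hy.1, ?_, ?_⟩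
      · rintro y1 ⟨hy1C, ε1, hε1, h1⟩ y2 ⟨hy2C, ε2, hε2, h2⟩ a b ha hb hab
        refine ⟨hCconv hy1C hy2C ha hb hab, min ε1 ε2, lt_min hε1 hε2, ?_⟩
        have h1' := hshrink y1 _ _ (lt_min hε1 hε2) (min_le_left _ _) h1
        have h2' := hshrink y2 _ _ (lt_min hε1 hε2) (min_le_right _ _) h2
        have h := hCconv h1' h2' ha hb hab
        have heq : a • (x - min ε1 ε2 • y1) + b • (x - min ε1 ε2 • y2)
            = x - min ε1 ε2 • (a • y1 + b • y2) := by
          have : a • x + b • x = x := by rw [← add_smul, hab, one_smul]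
          rw [smul_sub, smul_sub, smul_add]
          rw [smul_comm a, smul_comm b]
          rw [sub_add_sub_comm, this]
        rwa [heq] at h
      · rintro y1 hy1 y2 hy2 ⟨_, ε, hε, hmem⟩
        have key : ∀ z1 ∈ C, ∀ z2 ∈ C,
            x - ε • ((1/2:ℝ) • (z1 + z2)) ∈ C → x - (ε/2) • z1 ∈ C := by
          intro z1 hz1 z2 hz2 hm
          have heq : x - (ε/2) • z1 = (x - ε • ((1/2:ℝ) • (z1 + z2))) + (ε/2) • z2 := by
            rw [smul_smul, smul_add]; module
          rw [heq]
          exact haddC _ hm _ (hCcone (ε/2) (by linarith) z2 hz2)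
        refine ⟨⟨hy1, ε/2, by linarith, key y1 hy1 y2 hy2 hmem⟩,
          ⟨hy2, ε/2, by linarith, ?_⟩⟩
        have hm' : x - ε • ((1/2:ℝ) • (y2 + y1)) ∈ C := by
          rwa [add_comm y2 y1]
        exact key y2 hy2 y1 hy1 hm'
    have hxF : x ∈ F := by
      refine ⟨hx, 1/2, by norm_num, ?_⟩
      have : x - (1/2:ℝ) • x = (1/2:ℝ) • x := by module
      rw [this]; exact hCcone _ (by norm_num) _ hx
    intro e he
    exact (hEmin F hFface hxF he).2
  -- C ∩ span E ⊆ E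
  have hcapE : ∀ c ∈ C, c ∈ L → c ∈ E := by
    intro c hc hcL
    obtain ⟨a, ha, b, hb, hab⟩ := hrep c hcL
    have h2c : (2:ℝ) • c ∈ C := hCcone 2 (by norm_num) c hc
    have h2b : (2:ℝ) • b ∈ C := hCcone 2 (by norm_num) b (hEC hb)
    have hmid : (1/2 : ℝ) • ((2:ℝ) • c + (2:ℝ) • b) ∈ E := by
      have : (1/2 : ℝ) • ((2:ℝ) • c + (2:ℝ) • b) = c + b := by
        rw [smul_add, smul_smul, smul_smul]; norm_num
      rw [this]
      have : c + b = a := by rw [hab]; abel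
      rw [this]; exact ha
    have h2cE := (hEface _ h2c _ h2b hmid).1
    have := hsmulE (1/2) (by norm_num) _ h2cE
    rwa [smul_smul, show (1/2 : ℝ) * 2 = 1 by norm_num, one_smul] at this
  -- Part 1: dirSet x C = C + span E
  have part1 : dirSet x C = C + (L : Set Y) := by
    ext v
    constructor
    · rintro ⟨ε, hε, hmem⟩
      refine Set.mem_add.2 ⟨ε⁻¹ • (x + ε • v), hCcone ε⁻¹ (by positivity) _ hmem,
        -(ε⁻¹ • x), ?_, ?_⟩
      · exact neg_mem (Submodule.smul_mem L ε⁻¹ (Submodule.subset_span hxE))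
      · rw [smul_add, smul_smul, inv_mul_cancel₀ hε.ne', one_smul]; abel
    · intro hv
      obtain ⟨c, hc, s, hs, rfl⟩ := Set.mem_add.1 hv
      obtain ⟨a, ha, b, hb, rfl⟩ := hrep s hs
      obtain ⟨δ, hδ, hδmem⟩ := hmemF b hb
      refine ⟨δ, hδ, ?_⟩
      have heq : x + δ • (c + (a - b)) = ((x - δ • b) + δ • c) + δ • a := by
        rw [smul_add, smul_sub]; module
      rw [heq]
      exact haddC _ (haddC _ hδmem _ (hCcone δ hδ.le c hc)) _
        (hCcone δ hδ.le a (hEC ha))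
  -- Part 2: ldirSet x C = span E
  have part2 : ldirSet x C = (L : Set Y) := by
    ext v
    constructor
    · rintro ⟨hv, hv'⟩
      rw [part1] at hv hv'
      obtain ⟨c1, hc1, l1, hl1, he1⟩ := Set.mem_add.1 hv
      obtain ⟨c2, hc2, l2, hl2, he2⟩ := Set.mem_add.1 hv'
      have hsum : c1 + c2 = -(l1 + l2) := by
        have : (c1 + l1) + (c2 + l2) = 0 := by rw [he1, he2]; abel
        have h' : c1 + c2 + (l1 + l2) = 0 := by rw [← this]; abel
        linear_combination (norm := abel) h'
      have hsumL : c1 + c2 ∈ L := by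
        rw [hsum]; exact neg_mem (add_mem hl1 hl2)
      have hsumE : c1 + c2 ∈ E := hcapE _ (haddC _ hc1 _ hc2) hsumL
      have hc1E : c1 ∈ E := (hEface c1 hc1 c2 hc2 (hsmulE _ (by norm_num) _ hsumE)).1
      have : v = c1 + l1 := he1.symm
      rw [this]
      exact add_mem (Submodule.subset_span (s := E) hc1E) hl1
    · intro hv
      constructor
      · rw [part1]; exact Set.mem_add.2 ⟨0, h0C, v, hv, by simp⟩
      · rw [part1]; exact Set.mem_add.2 ⟨0, h0C, -v, neg_mem hv, by simp⟩
  -- dual cone machinery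
  have hdual_coe : ∀ S : Set Y, dualConeSet S = (ProperCone.innerDual S : Set Y) := by
    intro S
    ext y
    simp only [dualConeSet, Set.mem_setOf_eq, SetLike.mem_coe, ProperCone.mem_innerDual]
    constructor
    · intro h z hz; rw [real_inner_comm]; exact h z hz
    · intro h z hz; rw [real_inner_comm]; exact h hz
  have hdual_closure : ∀ S : Set Y, dualConeSet (closure S) = dualConeSet S := by
    intro S
    apply Set.Subset.antisymm
    · intro y hy z hz; exact hy z (subset_closure hz)
    · intro y hy z hz
      have hcl : closure S ⊆ {w : Y | 0 ≤ ⟪y, w⟫} := by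
        apply closure_minimal hy
        have hc : Continuous fun w : Y => ⟪y, w⟫ :=
          Continuous.inner continuous_const continuous_id'
        exact isClosed_le continuous_const hc
      exact hcl hz
  -- conjFace C E = dual cone of C + span E
  have hconj : conjFace C E = dualConeSet (C + (L : Set Y)) := by
    ext y
    constructor
    · rintro ⟨hyC, hyE⟩ z hz
      obtain ⟨c, hc, s, hs, rfl⟩ := Set.mem_add.1 hz
      obtain ⟨a, ha, b, hb, rfl⟩ := hrep s hs
      rw [inner_add_right, inner_sub_right, hyE a ha, hyE b hb]
      simpa using hyC c hc
    · intro hy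
      constructor
      · intro c hc
        have := hy (c + 0) (Set.mem_add.2 ⟨c, hc, 0, zero_mem L, rfl⟩)
        simpa using this
      · intro e he
        have heL : e ∈ L := Submodule.subset_span he
        have h1 := hy (0 + e) (Set.mem_add.2 ⟨0, h0C, e, heL, rfl⟩)
        have h2 := hy (0 + (-e)) (Set.mem_add.2 ⟨0, h0C, -e, neg_mem heL, rfl⟩)
        simp only [zero_add] at h1 h2
        rw [inner_neg_right] at h2
        linarith
  -- the closed convex cone closure (C + span E)
  have part3 : closure (dirSet x C) = dualConeSet (conjFace C E) := by
    set K0 : ConvexCone ℝ Y :=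
      { carrier := C + (L : Set Y)
        smul_mem' := by
          rintro t ht z hz
          obtain ⟨c, hc, s, hs, rfl⟩ := Set.mem_add.1 hz
          exact Set.mem_add.2 ⟨t • c, hCcone t ht.le c hc, t • s,
            Submodule.smul_mem L t hs, by rw [smul_add]⟩
        add_mem' := by
          rintro z1 hz1 z2 hz2
          obtain ⟨c1, hc1, s1, hs1, rfl⟩ := Set.mem_add.1 hz1
          obtain ⟨c2, hc2, s2, hs2, rfl⟩ := Set.mem_add.1 hz2
          exact Set.mem_add.2 ⟨c1 + c2, haddC _ hc1 _ hc2, s1 + s2,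
            add_mem hs1 hs2, by abel⟩ } with hK0
    have hK0coe : (K0 : Set Y) = C + (L : Set Y) := rfl
    set K : ConvexCone ℝ Y := K0.closure with hK
    have hKcoe : (K : Set Y) = closure (C + (L : Set Y)) := ConvexCone.coe_closure K0
    have hKne : (K : Set Y).Nonempty := by
      refine ⟨0, ?_⟩
      rw [hKcoe]
      exact subset_closure (Set.mem_add.2 ⟨0, h0C, 0, zero_mem L, by simp⟩)
    have hKclosed : IsClosed (K : Set Y) := by rw [hKcoe]; exact isClosed_closure
    have hbipolar : ((ProperCone.innerDual ((ProperCone.innerDual (K : Set Y)) : Set Y)) : Set Y)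
        = (K : Set Y) := by
      let P : ProperCone ℝ Y :=
        ⟨K.toPointedCone (ConvexCone.Pointed.of_nonempty_of_isClosed hKne hKclosed), hKclosed⟩
      have := ProperCone.innerDual_innerDual P
      exact congrArg (fun Q : ProperCone ℝ Y => (Q : Set Y)) this
    have hdualK : dualConeSet (K : Set Y) = dualConeSet (C + (L : Set Y)) := by
      rw [hKcoe, hdual_closure]
    calc closure (dirSet x C) = closure (C + (L : Set Y)) := by rw [part1]
      _ = (K : Set Y) := hKcoe.symm
      _ = ((ProperCone.innerDual ((ProperCone.innerDual (K : Set Y)) : Set Y)) : Set Y) := by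
          rw [hbipolar]
      _ = dualConeSet (dualConeSet (K : Set Y)) := by
          rw [hdual_coe ((K : Set Y)), hdual_coe]
      _ = dualConeSet (conjFace C E) := by rw [hdualK, ← hconj]
  refine ⟨part1, part2, part3, ?_⟩
  -- Part 4
  ext v
  simp only [tanSet, Set.mem_setOf_eq, part3, dualConeSet]
  constructor
  · rintro ⟨h1, h2⟩ w hw
    have hle := h2 w hw
    rw [inner_neg_left] at hle
    have hge := h1 w hw
    linarith
  · intro h
    constructor
    · intro w hw; rw [h w hw]
    · intro w hw; rw [inner_neg_left, h w hw]; simp
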